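/- Under the setup where, for a controller triple Π = (R₂, b, e) with R₂ symmetric, the matrices a := 2Θ₂R₂ − (1/2)(bJ₂bᵀ + eJ̃₁eᵀ)Θ₂⁻¹, c := −dJ₂bᵀΘ₂⁻¹, 𝒜(Π) := [[A, Ec],[eC, a]], ℬ(Π) := [[B, Ed],[eD, b]], 𝒞(Π) := [F, Gc] are defined (with Θ₂ antisymmetric invertible), let σ ∈ ℝ^{n×n} be symplectic in the sense σΘ₂σᵀ = Θ₂, and set Π̃ := (σ⁻ᵀR₂σ⁻¹, σb, σe) and S := diag(I_n, σ). Then 𝒜(Π̃) = S 𝒜(Π) S⁻¹, ℬ(Π̃) = S ℬ(Π), and 𝒞(Π̃) = 𝒞(Π) S⁻¹. Consequently, 𝒜(Π̃) − (1/(2T))I_{2n} is Hurwitz if and only if 𝒜(Π) − (1/(2T))I_{2n} is, and if P_T solves 𝒜_T(Π) P_T + P_T 𝒜_T(Π)ᵀ + (1/T)Σ + ℬ(Π)ℬ(Π)ᵀ = 0, then P̃_T := S P_T Sᵀ solves the corresponding equation for Π̃ with initial covariance SΣSᵀ, and (1/2)tr(𝒞(Π̃)ᵀ𝒞(Π̃)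 P̃_T) = (1/2)tr(𝒞(Π)ᵀ𝒞(Π) P_T), i.e. the discounted mean square cost is invariant under the symplectic similarity transformation 𝔖_σ. -/

import Mathlib

open Matrix Kronecker

/-- A real square matrix is Hurwitz if all its (complex) eigenvalues have negative real part. -/
def IsHurwitz {ι : Type*} [Fintype ι] [DecidableEq ι] (A : Matrix ι ι ℝ) : Prop :=
  ∀ μ ∈ spectrum ℂ (A.map (Complex.ofReal : ℝ → ℂ)), μ.re < 0


/-- Spectrum of a real matrix (viewed over ℂ) is invariant under conjugation. -/
lemma spectrum_conj_eq {ι : Type*} [Fintype ι] [DecidableEq ι] (S A : Matrix ι ι ℝ)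
    (h1 : S * S⁻¹ = 1) (h2 : S⁻¹ * S = 1) :
    spectrum ℂ ((S * A * S⁻¹).map (Complex.ofReal : ℝ → ℂ)) =
      spectrum ℂ (A.map (Complex.ofReal : ℝ → ℂ)) := by
  have hom : (Complex.ofReal : ℝ → ℂ) = ⇑(algebraMap ℝ ℂ) := Complex.coe_algebraMap.symm
  rw [hom, Matrix.map_mul, Matrix.map_mul]
  have m1 : S.map ⇑(algebraMap ℝ ℂ) * (S⁻¹).map ⇑(algebraMap ℝ ℂ) = 1 := by
    rw [← Matrix.map_mul, h1]; exact Matrix.map_one _ (map_zero _) (map_one _)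
  have m2 : (S⁻¹).map ⇑(algebraMap ℝ ℂ) * S.map ⇑(algebraMap ℝ ℂ) = 1 := by
    rw [← Matrix.map_mul, h2]; exact Matrix.map_one _ (map_zero _) (map_one _)
  exact spectrum.units_conjugate (u := ⟨_, _, m1, m2⟩)

/-- **Symplectic invariance of the closed-loop system and of the discounted cost.**
For a symplectic `σ` (`σΘ₂σᵀ = Θ₂`) and the transformed controller parameters
`Π̃ = (σ⁻ᵀR₂σ⁻¹, σb, σe)`, with `S = diag(I, σ)` one has `𝒜(Π̃) = S𝒜(Π)S⁻¹`,
`ℬ(Π̃) = Sℬ(Π)`, `𝒞(Π̃) = 𝒞(Π)S⁻¹`; hence `𝒜_T(Π̃)` is Hurwitz iff `𝒜_T(Π)` is, the matrix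
`SP_TSᵀ` solves the ALE for `Π̃` with initial covariance `SΣSᵀ`, and the discounted mean
square cost is invariant. -/
theorem symplectic_invariance_discounted_cost
    {n p₁ p₂ k₁ k₂ r : ℕ}
    (Θ₂ : Matrix (Fin n) (Fin n) ℝ) (hΘ₂ : Θ₂ᵀ = -Θ₂) (hΘ₂inv : IsUnit Θ₂.det)
    (J₁ : Matrix (Fin 2 × Fin k₁) (Fin 2 × Fin k₁) ℝ)
    (hJ₁ : J₁ = (!![0, 1; -1, 0] : Matrix (Fin 2) (Fin 2) ℝ) ⊗ₖ (1 : Matrix (Fin k₁) (Fin k₁) ℝ))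
    (J₂ : Matrix (Fin 2 × Fin k₂) (Fin 2 × Fin k₂) ℝ)
    (hJ₂ : J₂ = (!![0, 1; -1, 0] : Matrix (Fin 2) (Fin 2) ℝ) ⊗ₖ (1 : Matrix (Fin k₂) (Fin k₂) ℝ))
    (A : Matrix (Fin n) (Fin n) ℝ) (B : Matrix (Fin n) (Fin 2 × Fin k₁) ℝ)
    (C : Matrix (Fin p₁) (Fin n) ℝ) (D : Matrix (Fin p₁) (Fin 2 × Fin k₁) ℝ)
    (hD : D * Dᵀ = 1) (E : Matrix (Fin n) (Fin p₂) ℝ)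
    (d : Matrix (Fin p₂) (Fin 2 × Fin k₂) ℝ) (hd : d * dᵀ = 1)
    (F : Matrix (Fin r) (Fin n) ℝ) (G : Matrix (Fin r) (Fin p₂) ℝ)
    (Jt₁ : Matrix (Fin p₁) (Fin p₁) ℝ) (hJt₁ : Jt₁ = D * J₁ * Dᵀ)
    -- the controller parameters Π = (R₂, b, e) and the associated matrices
    (R₂ : Matrix (Fin n) (Fin n) ℝ) (hR₂ : R₂ᵀ = R₂)
    (b : Matrix (Fin n) (Fin 2 × Fin k₂) ℝ) (e : Matrix (Fin n) (Fin p₁) ℝ)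
    (a : Matrix (Fin n) (Fin n) ℝ)
    (ha : a = (2 : ℝ) • (Θ₂ * R₂) - (1 / 2 : ℝ) • ((b * J₂ * bᵀ + e * Jt₁ * eᵀ) * Θ₂⁻¹))
    (c : Matrix (Fin p₂) (Fin n) ℝ) (hc : c = -(d * J₂ * bᵀ * Θ₂⁻¹))
    (𝒜 : Matrix (Fin n ⊕ Fin n) (Fin n ⊕ Fin n) ℝ)
    (h𝒜 : 𝒜 = fromBlocks A (E * c) (e * C) a)
    (ℬ : Matrix (Fin n ⊕ Fin n) ((Fin 2 × Fin k₁) ⊕ (Fin 2 × Fin k₂)) ℝ)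
    (hℬ : ℬ = fromBlocks B (E * d) (e * D) b)
    (𝒞 : Matrix (Fin r) (Fin n ⊕ Fin n) ℝ) (h𝒞 : 𝒞 = fromCols F (G * c))
    -- a symplectic similarity transformation σ and the transformed parameters Π̃
    (σ : Matrix (Fin n) (Fin n) ℝ) (hσ : σ * Θ₂ * σᵀ = Θ₂)
    (R₂' : Matrix (Fin n) (Fin n) ℝ) (hR₂' : R₂' = (σ⁻¹)ᵀ * R₂ * σ⁻¹)
    (b' : Matrix (Fin n) (Fin 2 × Fin k₂) ℝ) (hb' : b' = σ * b)
    (e' : Matrix (Fin n) (Fin p₁) ℝ) (he' : e' = σ * e)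
    (a' : Matrix (Fin n) (Fin n) ℝ)
    (ha' : a' = (2 : ℝ) • (Θ₂ * R₂') - (1 / 2 : ℝ) • ((b' * J₂ * b'ᵀ + e' * Jt₁ * e'ᵀ) * Θ₂⁻¹))
    (c' : Matrix (Fin p₂) (Fin n) ℝ) (hc' : c' = -(d * J₂ * b'ᵀ * Θ₂⁻¹))
    (𝒜' : Matrix (Fin n ⊕ Fin n) (Fin n ⊕ Fin n) ℝ)
    (h𝒜' : 𝒜' = fromBlocks A (E * c') (e' * C) a')
    (ℬ' : Matrix (Fin n ⊕ Fin n) ((Fin 2 × Fin k₁) ⊕ (Fin 2 × Fin k₂)) ℝ)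
    (hℬ' : ℬ' = fromBlocks B (E * d) (e' * D) b')
    (𝒞' : Matrix (Fin r) (Fin n ⊕ Fin n) ℝ) (h𝒞' : 𝒞' = fromCols F (G * c'))
    (S : Matrix (Fin n ⊕ Fin n) (Fin n ⊕ Fin n) ℝ) (hS : S = fromBlocks 1 0 0 σ) :
    𝒜' = S * 𝒜 * S⁻¹ ∧
    ℬ' = S * ℬ ∧
    𝒞' = 𝒞 * S⁻¹ ∧
    (∀ T : ℝ, 0 < T →
      (IsHurwitz (𝒜' - (1 / (2 * T)) • 1) ↔ IsHurwitz (𝒜 - (1 / (2 * T)) • 1))) ∧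
    (∀ T : ℝ, 0 < T →
      ∀ Sgm PT : Matrix (Fin n ⊕ Fin n) (Fin n ⊕ Fin n) ℝ, Sgmᵀ = Sgm →
        (𝒜 - (1 / (2 * T)) • 1) * PT + PT * (𝒜 - (1 / (2 * T)) • 1)ᵀ +
          (1 / T) • Sgm + ℬ * ℬᵀ = 0 →
        ((𝒜' - (1 / (2 * T)) • 1) * (S * PT * Sᵀ) + (S * PT * Sᵀ) * (𝒜' - (1 / (2 * T)) • 1)ᵀ +
            (1 / T) • (S * Sgm * Sᵀ) + ℬ' * ℬ'ᵀ = 0 ∧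
          (1 / 2 : ℝ) * (𝒞'ᵀ * 𝒞' * (S * PT * Sᵀ)).trace =
            (1 / 2 : ℝ) * (𝒞ᵀ * 𝒞 * PT).trace)) := by
  classical
  -- σ is invertible
  have hσdet : IsUnit σ.det := by
    have h := congrArg Matrix.det hσ
    rw [Matrix.det_mul, Matrix.det_mul, Matrix.det_transpose] at h
    refine isUnit_iff_ne_zero.mpr fun h0 => hΘ₂inv.ne_zero ?_
    rw [h0] at h; simpa using h.symm
  have hσσ' : σ * σ⁻¹ = 1 := Matrix.mul_nonsing_inv σ hσdet
  have hσ'σ : σ⁻¹ * σ = 1 := Matrix.nonsing_inv_mul σ hσdet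
  have hΘΘ' : Θ₂ * Θ₂⁻¹ = 1 := Matrix.mul_nonsing_inv Θ₂ hΘ₂inv
  -- key symplectic identities
  have key1 : σᵀ * Θ₂⁻¹ = Θ₂⁻¹ * σ⁻¹ := by
    have h1 : Θ₂ * σᵀ = σ⁻¹ * Θ₂ := by
      calc Θ₂ * σᵀ = (σ⁻¹ * σ) * Θ₂ * σᵀ := by rw [hσ'σ, Matrix.one_mul]
        _ = σ⁻¹ * (σ * Θ₂ * σᵀ) := by simp only [Matrix.mul_assoc]
        _ = σ⁻¹ * Θ₂ := by rw [hσ]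
    calc σᵀ * Θ₂⁻¹ = Θ₂⁻¹ * (Θ₂ * σᵀ) * Θ₂⁻¹ := by
          rw [← Matrix.mul_assoc, Matrix.nonsing_inv_mul Θ₂ hΘ₂inv, Matrix.one_mul]
      _ = Θ₂⁻¹ * σ⁻¹ * (Θ₂ * Θ₂⁻¹) := by rw [h1]; simp only [Matrix.mul_assoc]
      _ = Θ₂⁻¹ * σ⁻¹ := by rw [hΘΘ', Matrix.mul_one]
  have key2 : Θ₂ * (σ⁻¹)ᵀ = σ * Θ₂ := by
    have hts : σᵀ * (σ⁻¹)ᵀ = 1 := by rw [← Matrix.transpose_mul, hσ'σ, Matrix.transpose_one]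
    calc Θ₂ * (σ⁻¹)ᵀ = σ * Θ₂ * σᵀ * (σ⁻¹)ᵀ := by rw [hσ]
      _ = σ * Θ₂ * (σᵀ * (σ⁻¹)ᵀ) := by simp only [Matrix.mul_assoc]
      _ = σ * Θ₂ := by rw [hts, Matrix.mul_one]
  have key1' : ∀ (X : Matrix (Fin n) (Fin n) ℝ), σᵀ * (Θ₂⁻¹ * X) = Θ₂⁻¹ * (σ⁻¹ * X) := by
    intro X
    rw [← Matrix.mul_assoc, key1, Matrix.mul_assoc]
  have key2' : ∀ (X : Matrix (Fin n) (Fin n) ℝ), Θ₂ * ((σ⁻¹)ᵀ * X) = σ * (Θ₂ * X) := by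
    intro X
    rw [← Matrix.mul_assoc, key2, Matrix.mul_assoc]
  -- transformed controller matrices
  have hca : c' = c * σ⁻¹ := by
    subst hc hc' hb'
    simp only [Matrix.transpose_mul, Matrix.neg_mul, Matrix.mul_assoc, key1, key1']
  have haa : a' = σ * a * σ⁻¹ := by
    subst ha ha' hb' he' hR₂'
    simp only [Matrix.transpose_mul, Matrix.mul_sub, Matrix.sub_mul, Matrix.mul_smul,
      Matrix.smul_mul, Matrix.mul_add, Matrix.add_mul, Matrix.mul_assoc, key1, key1',
      key2, key2']
  -- S is invertible with explicit inverse
  have hSdet : IsUnit S.det := by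
    rw [hS, Matrix.det_fromBlocks_zero₂₁]
    simpa using hσdet
  have hSinv : S⁻¹ = fromBlocks 1 0 0 σ⁻¹ := by
    apply Matrix.inv_eq_right_inv
    rw [hS]
    simp [Matrix.fromBlocks_multiply, hσσ', Matrix.fromBlocks_one]
  have hSS' : S * S⁻¹ = 1 := Matrix.mul_nonsing_inv S hSdet
  have hS'S : S⁻¹ * S = 1 := Matrix.nonsing_inv_mul S hSdet
  -- the three similarity identities
  have hA : 𝒜' = S * 𝒜 * S⁻¹ := by
    rw [h𝒜', h𝒜, hSinv, hS, Matrix.fromBlocks_multiply, Matrix.fromBlocks_multiply]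
    simp [hca, haa, he', Matrix.mul_assoc]
  have hB : ℬ' = S * ℬ := by
    rw [hℬ', hℬ, hS, Matrix.fromBlocks_multiply]
    simp [hb', he', Matrix.mul_assoc]
  have hC : 𝒞' = 𝒞 * S⁻¹ := by
    rw [h𝒞', h𝒞, hSinv, Matrix.fromCols_mul_fromBlocks]
    simp [hca, Matrix.mul_assoc]
  refine ⟨hA, hB, hC, ?_, ?_⟩
  · -- Hurwitz equivalence
    intro T _
    have hshift : 𝒜' - (1 / (2 * T)) • 1 = S * (𝒜 - (1 / (2 * T)) • 1) * S⁻¹ := by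
      rw [hA, Matrix.mul_sub, Matrix.sub_mul, Matrix.mul_smul, Matrix.smul_mul,
        Matrix.mul_one, hSS']
    have hspec := spectrum_conj_eq S (𝒜 - (1 / (2 * T)) • 1) hSS' hS'S
    rw [← hshift] at hspec
    constructor <;> intro h μ hμ
    · exact h μ (hspec ▸ hμ)
    · exact h μ (hspec ▸ hμ : _)
  · -- Lyapunov equation and cost invariance
    intro T _ Sgm PT _ hALE
    have hshift : 𝒜' - (1 / (2 * T)) • 1 = S * (𝒜 - (1 / (2 * T)) • 1) * S⁻¹ := by
      rw [hA, Matrix.mul_sub, Matrix.sub_mul, Matrix.mul_smul, Matrix.smul_mul,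
        Matrix.mul_one, hSS']
    set X := 𝒜 - (1 / (2 * T)) • 1 with hXdef
    have hS'Sx : ∀ (M : Matrix (Fin n ⊕ Fin n) (Fin n ⊕ Fin n) ℝ), S⁻¹ * (S * M) = M := by
      intro M; rw [← Matrix.mul_assoc, hS'S, Matrix.one_mul]
    have hTx : ∀ (M : Matrix (Fin n ⊕ Fin n) (Fin n ⊕ Fin n) ℝ), Sᵀ * ((S⁻¹)ᵀ * M) = M := by
      intro M; rw [← Matrix.mul_assoc, ← Matrix.transpose_mul, hS'S, Matrix.transpose_one,
        Matrix.one_mul]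
    constructor
    · have key : (S * X * S⁻¹) * (S * PT * Sᵀ) + (S * PT * Sᵀ) * (S * X * S⁻¹)ᵀ +
          (1 / T) • (S * Sgm * Sᵀ) + (S * ℬ) * (S * ℬ)ᵀ =
          S * (X * PT + PT * Xᵀ + (1 / T) • Sgm + ℬ * ℬᵀ) * Sᵀ := by
        simp only [Matrix.transpose_mul, Matrix.mul_add, Matrix.add_mul, Matrix.mul_smul,
          Matrix.smul_mul, Matrix.mul_assoc, hS'Sx, hTx]
      rw [hshift, hB, key, hALE, Matrix.mul_zero, Matrix.zero_mul]
    · have hCC : 𝒞'ᵀ * 𝒞' * (S * PT * Sᵀ) = (S⁻¹)ᵀ * (𝒞ᵀ * 𝒞 * PT) * Sᵀ := by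
        rw [hC, Matrix.transpose_mul]
        simp only [Matrix.mul_assoc, hS'Sx]
      rw [hCC, Matrix.trace_mul_cycle, ← Matrix.mul_assoc, ← Matrix.transpose_mul, hS'S,
        Matrix.transpose_one, Matrix.one_mul]
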